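/- arXiv:0802.3505 — 5 statements merged into one kernel-verified Lean document; each statement's English description precedes it below -/
import Mathlib

section
/- If u : D → [−∞, +∞) is K₁-quasi-nearly subharmonic and v : D → [−∞, +∞) is K₂-quasi-nearly subharmonic, then max{u, v} is max{K₁, K₂}-quasi-nearly subharmonic on D. In particular, u⁺ = max{u, 0} is K₁-quasi-nearly subharmonic. -/
open MeasureTheory Metric Set

noncomputable def unitBallVol (E : Type*) [NormedAddCommGroup E] [MeasureSpace E] : ℝ :=
  (volume (ball (0 : E) 1)).toReal

/-- `u` is `K`-quasi-nearly subharmonic n.s. (in the narrow sense) on `D` in dimension `N`: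
`u` is measurable, `u⁺` is locally integrable on `D`, and the generalized sub-mean-value
inequality holds for `u` on all closed balls contained in `D`. -/
def IsQNSns {E : Type*} [NormedAddCommGroup E] [MeasureSpace E]
    (N : ℕ) (K : ℝ) (D : Set E) (u : E → ℝ) : Prop :=
  Measurable u ∧ LocallyIntegrableOn (fun x => max (u x) 0) D ∧
  ∀ x : E, ∀ r : ℝ, 0 < r → closedBall x r ⊆ D →
    u x ≤ (K / (unitBallVol E * r ^ N)) * ∫ y in ball x r, u y

/-- `u` is `K`-quasi-nearly subharmonic on `D`: `u` is measurable, `u⁺` is locally integrable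
on `D`, and for every `M ≥ 0` the function `u_M := max {u, -M} + M` satisfies the generalized
sub-mean-value inequality on all closed balls contained in `D`. -/
def IsQNS {E : Type*} [NormedAddCommGroup E] [MeasureSpace E]
    (N : ℕ) (K : ℝ) (D : Set E) (u : E → ℝ) : Prop :=
  Measurable u ∧ LocallyIntegrableOn (fun x => max (u x) 0) D ∧
  ∀ M : ℝ, 0 ≤ M → ∀ x : E, ∀ r : ℝ, 0 < r → closedBall x r ⊆ D →
    max (u x) (-M) + M ≤ (K / (unitBallVol E * r ^ N)) * ∫ y in ball x r, (max (u y) (-M) + M)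

lemma qns_vol_pos {N : ℕ} {r : ℝ} (hr : 0 < r) :
    0 < unitBallVol (EuclideanSpace ℝ (Fin N)) * r ^ N := by
  have h1 : 0 < volume (ball (0 : EuclideanSpace ℝ (Fin N)) 1) := measure_ball_pos _ _ one_pos
  have h2 : volume (ball (0 : EuclideanSpace ℝ (Fin N)) 1) < ⊤ := measure_ball_lt_top
  have : 0 < unitBallVol (EuclideanSpace ℝ (Fin N)) := ENNReal.toReal_pos h1.ne' h2.ne
  positivity

lemma qns_max_distrib (a b c M : ℝ) :
    max (max a b) c + M = max (max a c + M) (max b c + M) := by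
  simp only [max_def]
  split_ifs <;> linarith

/-- The zero function is `K`-QNS for any `K ≥ 1`. -/
lemma qns_zero {N : ℕ} (hN : 2 ≤ N) {K : ℝ} (hK : 1 ≤ K)
    (D : Set (EuclideanSpace ℝ (Fin N))) :
    IsQNS N K D (fun _ => 0) := by
  refine ⟨measurable_const, ?_, ?_⟩
  · simpa using (locallyIntegrable_const (0 : ℝ)).locallyIntegrableOn D
  · intro M hM x r hr hsub
    have hmax : max (0 : ℝ) (-M) = 0 := max_eq_left (by linarith)
    have hvol : (volume (ball x r)).toReal
        = unitBallVol (EuclideanSpace ℝ (Fin N)) * r ^ N := by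
      haveI : Nonempty (Fin N) := ⟨⟨0, by omega⟩⟩
      rw [Measure.addHaar_ball volume x hr.le, finrank_euclideanSpace_fin]
      rw [ENNReal.toReal_mul, ENNReal.toReal_ofReal (by positivity), unitBallVol]
      ring
    have hc : 0 < unitBallVol (EuclideanSpace ℝ (Fin N)) * r ^ N := qns_vol_pos hr
    rw [hmax, zero_add]
    have hint : (∫ _ in ball x r, (max (0:ℝ) (-M) + M))
        = (volume (ball x r)).toReal * M := by
      rw [setIntegral_const, hmax, zero_add, smul_eq_mul]; rfl
    rw [hint, hvol, div_mul_eq_mul_div,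
      mul_comm (unitBallVol (EuclideanSpace ℝ (Fin N)) * r ^ N) M,
      mul_div_assoc, mul_div_assoc, div_self hc.ne', mul_one]
    nlinarith

/-- Max of a `K₁`-QNS and a `K₂`-QNS function is `max K₁ K₂`-QNS. -/
lemma qns_max {N : ℕ} (hN : 2 ≤ N) {K₁ K₂ : ℝ} (hK₁ : 1 ≤ K₁) (hK₂ : 1 ≤ K₂)
    (D : Set (EuclideanSpace ℝ (Fin N))) (u v : EuclideanSpace ℝ (Fin N) → ℝ)
    (hu : IsQNS N K₁ D u) (hv : IsQNS N K₂ D v) :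
    IsQNS N (max K₁ K₂) D (fun x => max (u x) (v x)) := by
  obtain ⟨humeas, huloc, huineq⟩ := hu
  obtain ⟨hvmeas, hvloc, hvineq⟩ := hv
  refine ⟨humeas.max hvmeas, ?_, ?_⟩
  · -- local integrability of (max u v)⁺
    intro x hx
    obtain ⟨t, ht, hint⟩ := (huloc.add hvloc) x hx
    refine ⟨t, ht, hint.mono' ?_ ?_⟩
    · exact ((humeas.max hvmeas).max measurable_const).aestronglyMeasurable
    · refine Filter.Eventually.of_forall fun y => ?_
      rw [Real.norm_eq_abs, abs_of_nonneg (le_max_right _ _)]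
      have h1 : u y ≤ max (u y) 0 + max (v y) 0 :=
        le_add_of_le_of_nonneg (le_max_left _ _) (le_max_right _ _)
      have h2 : v y ≤ max (u y) 0 + max (v y) 0 :=
        le_add_of_nonneg_of_le (le_max_right _ _) (le_max_left _ _)
      have h3 : (0:ℝ) ≤ max (u y) 0 + max (v y) 0 :=
        add_nonneg (le_max_right _ _) (le_max_right _ _)
      exact max_le (max_le h1 h2) h3
  · intro M hM x r hr hsub
    have hc : 0 < unitBallVol (EuclideanSpace ℝ (Fin N)) * r ^ N := qns_vol_pos hr
    set c : ℝ := unitBallVol (EuclideanSpace ℝ (Fin N)) * r ^ N with hcdef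
    set A : EuclideanSpace ℝ (Fin N) → ℝ := fun y => max (u y) (-M) + M with hA
    set B : EuclideanSpace ℝ (Fin N) → ℝ := fun y => max (v y) (-M) + M with hB
    have hF : ∀ y, max (max (u y) (v y)) (-M) + M = max (A y) (B y) := fun y =>
      qns_max_distrib _ _ _ _
    have hAnn : ∀ y, 0 ≤ A y := fun y => by
      have : -M ≤ max (u y) (-M) := le_max_right _ _
      simp only [hA]; linarith
    have hBnn : ∀ y, 0 ≤ B y := fun y => by
      have : -M ≤ max (v y) (-M) := le_max_right _ _
      simp only [hB]; linarith
    have huI : IntegrableOn (fun y => max (u y) 0) (ball x r) volume :=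
      ((huloc.integrableOn_compact_subset hsub (isCompact_closedBall x r)).mono_set
        ball_subset_closedBall)
    have hvI : IntegrableOn (fun y => max (v y) 0) (ball x r) volume :=
      ((hvloc.integrableOn_compact_subset hsub (isCompact_closedBall x r)).mono_set
        ball_subset_closedBall)
    have hAle : ∀ y, A y ≤ max (u y) 0 + M := fun y => by
      have : max (u y) (-M) ≤ max (u y) 0 := max_le_max le_rfl (by linarith)
      simp only [hA]; linarith
    have hBle : ∀ y, B y ≤ max (v y) 0 + M := fun y => by
      have : max (v y) (-M) ≤ max (v y) 0 := max_le_max le_rfl (by linarith)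
      simp only [hB]; linarith
    have hMc : IntegrableOn (fun _ : EuclideanSpace ℝ (Fin N) => M) (ball x r) volume :=
      integrableOn_const measure_ball_lt_top.ne
    have hAI : IntegrableOn A (ball x r) volume := by
      refine (huI.add hMc).mono'
        (((humeas.max measurable_const).add measurable_const).aestronglyMeasurable) ?_
      refine Filter.Eventually.of_forall fun y => ?_
      rw [Real.norm_eq_abs, abs_of_nonneg (hAnn y)]
      exact hAle y
    have hBI : IntegrableOn B (ball x r) volume := by
      refine (hvI.add hMc).mono'
        (((hvmeas.max measurable_const).add measurable_const).aestronglyMeasurable) ?_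
      refine Filter.Eventually.of_forall fun y => ?_
      rw [Real.norm_eq_abs, abs_of_nonneg (hBnn y)]
      exact hBle y
    have hFI : IntegrableOn (fun y => max (A y) (B y)) (ball x r) volume := hAI.sup hBI
    have hintA : (∫ y in ball x r, A y) ≤ ∫ y in ball x r, max (A y) (B y) :=
      setIntegral_mono_on hAI hFI measurableSet_ball fun y _ => le_max_left _ _
    have hintB : (∫ y in ball x r, B y) ≤ ∫ y in ball x r, max (A y) (B y) :=
      setIntegral_mono_on hBI hFI measurableSet_ball fun y _ => le_max_right _ _
    have hintF0 : 0 ≤ ∫ y in ball x r, max (A y) (B y) :=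
      setIntegral_nonneg measurableSet_ball fun y _ => le_trans (hAnn y) (le_max_left _ _)
    simp only [hF]
    have hc1 : K₁ / c ≤ max K₁ K₂ / c := (div_le_div_iff_of_pos_right hc).2 (le_max_left _ _)
    have hc2 : K₂ / c ≤ max K₁ K₂ / c := (div_le_div_iff_of_pos_right hc).2 (le_max_right _ _)
    refine max_le ?_ ?_
    · calc A x ≤ (K₁ / c) * ∫ y in ball x r, A y := huineq M hM x r hr hsub
        _ ≤ (K₁ / c) * ∫ y in ball x r, max (A y) (B y) :=
          mul_le_mul_of_nonneg_left hintA (div_nonneg (by linarith) hc.le)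
        _ ≤ (max K₁ K₂ / c) * ∫ y in ball x r, max (A y) (B y) :=
          mul_le_mul_of_nonneg_right hc1 hintF0
    · calc B x ≤ (K₂ / c) * ∫ y in ball x r, B y := hvineq M hM x r hr hsub
        _ ≤ (K₂ / c) * ∫ y in ball x r, max (A y) (B y) :=
          mul_le_mul_of_nonneg_left hintB (div_nonneg (by linarith) hc.le)
        _ ≤ (max K₁ K₂ / c) * ∫ y in ball x r, max (A y) (B y) :=
          mul_le_mul_of_nonneg_right hc2 hintF0

/-- the pointwise maximum of a `K₁`- and a `K₂`-quasi-nearly subharmonic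
function is `max {K₁, K₂}`-quasi-nearly subharmonic; in particular `u⁺ = max {u, 0}` is
`K₁`-quasi-nearly subharmonic. -/
theorem stmt_3 {N : ℕ} (hN : 2 ≤ N) {K₁ K₂ : ℝ} (hK₁ : 1 ≤ K₁) (hK₂ : 1 ≤ K₂)
    (D : Set (EuclideanSpace ℝ (Fin N))) (hDo : IsOpen D) (hDc : IsConnected D)
    (u v : EuclideanSpace ℝ (Fin N) → ℝ)
    (hu : IsQNS N K₁ D u) (hv : IsQNS N K₂ D v) :
    IsQNS N (max K₁ K₂) D (fun x => max (u x) (v x)) ∧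
      IsQNS N K₁ D (fun x => max (u x) 0) := by
  constructor
  · exact qns_max hN hK₁ hK₂ D u v hu hv
  · have := qns_max hN hK₁ hK₁ D u (fun _ => 0) hu (qns_zero hN hK₁ D)
    rwa [max_self] at this
end

section
/- Let F be a family of K-quasi-nearly subharmonic functions on a domain D ⊆ ℝ^N and let w := sup_{u ∈ F} u. If w is Lebesgue measurable and w⁺ is locally integrable, then w is K-quasi-nearly subharmonic on D. -/
open MeasureTheory Metric Set

/-- the pointwise supremum `w` of a family of `K`-quasi-nearly subharmonic
functions is `K`-quasi-nearly subharmonic, provided `w` is measurable and `w⁺` is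
locally integrable. -/
theorem stmt_4 {N : ℕ} (hN : 2 ≤ N) {K : ℝ} (hK : 1 ≤ K)
    (D : Set (EuclideanSpace ℝ (Fin N))) (hDo : IsOpen D) (hDc : IsConnected D)
    {ι : Type*} [Nonempty ι] (F : ι → EuclideanSpace ℝ (Fin N) → ℝ)
    (hF : ∀ i, IsQNS N K D (F i))
    (w : EuclideanSpace ℝ (Fin N) → ℝ)
    (hw : ∀ x ∈ D, IsLUB (Set.range fun i => F i x) (w x))
    (hwmeas : Measurable w)
    (hwint : LocallyIntegrableOn (fun x => max (w x) 0) D) :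
    IsQNS N K D w := by
  refine ⟨hwmeas, hwint, fun M hM x r hr hball => ?_⟩
  have hxD : x ∈ D := hball (by simpa using hr.le)
  -- positivity of the constant
  have hvol : 0 < unitBallVol (EuclideanSpace ℝ (Fin N)) := by
    have h1 : (0:ℝ) < 1 := one_pos
    have := measure_ball_pos (volume) (0 : EuclideanSpace ℝ (Fin N)) h1
    have hfin : volume (ball (0 : EuclideanSpace ℝ (Fin N)) 1) < ⊤ := measure_ball_lt_top
    exact ENNReal.toReal_pos this.ne' hfin.ne
  have hc : 0 < K / (unitBallVol (EuclideanSpace ℝ (Fin N)) * r ^ N) := by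
    apply div_pos (lt_of_lt_of_le one_pos hK)
    positivity
  -- integrability of w_M on the ball
  have hwMmeas : Measurable fun y => max (w y) (-M) + M :=
    (hwmeas.max measurable_const).add measurable_const
  have hwplus : IntegrableOn (fun y => max (w y) 0) (closedBall x r) volume :=
    hwint.integrableOn_compact_subset hball (isCompact_closedBall x r)
  have hwM : IntegrableOn (fun y => max (w y) (-M) + M) (ball x r) volume := by
    have hg : IntegrableOn (fun y => max (w y) 0 + M) (ball x r) volume :=
      (hwplus.mono_set ball_subset_closedBall).add
        (integrableOn_const (C := M) measure_ball_lt_top.ne)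
    refine Integrable.mono' hg hwMmeas.aestronglyMeasurable ?_
    filter_upwards with y
    have h1 : (0:ℝ) ≤ max (w y) (-M) + M := by
      have : -M ≤ max (w y) (-M) := le_max_right _ _
      linarith
    rw [Real.norm_eq_abs, abs_of_nonneg h1]
    have : max (w y) (-M) ≤ max (w y) 0 := max_le_max le_rfl (neg_nonpos.2 hM)
    linarith
  -- the integral is nonnegative
  have hintnn : 0 ≤ ∫ y in ball x r, (max (w y) (-M) + M) := by
    apply integral_nonneg
    intro y
    have : -M ≤ max (w y) (-M) := le_max_right _ _
    simp only [Pi.zero_apply]; linarith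
  rcases le_or_gt (w x) (-M) with hcase | hcase
  · rw [max_eq_right hcase]
    have : (0:ℝ) ≤ (K / (unitBallVol (EuclideanSpace ℝ (Fin N)) * r ^ N)) *
        ∫ y in ball x r, (max (w y) (-M) + M) := mul_nonneg hc.le hintnn
    linarith
  · rw [max_eq_left hcase.le]
    apply le_of_forall_pos_le_add
    intro ε hε
    obtain ⟨_, ⟨i, rfl⟩, hi, _⟩ := (hw x hxD).exists_between (by linarith : w x - ε < w x)
    -- F i satisfies the sub-mean inequality
    obtain ⟨hFmeas, hFint, hFineq⟩ := hF i
    have h1 : w x + M ≤ max (F i x) (-M) + M + ε := by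
      have : F i x ≤ max (F i x) (-M) := le_max_left _ _
      linarith
    have h2 := hFineq M hM x r hr hball
    -- compare integrals
    have h3 : ∫ y in ball x r, (max (F i y) (-M) + M) ≤
        ∫ y in ball x r, (max (w y) (-M) + M) := by
      apply integral_mono_of_nonneg
      · filter_upwards with y
        have : -M ≤ max (F i y) (-M) := le_max_right _ _
        simp only [Pi.zero_apply]; linarith
      · exact hwM
      · have hsub : ball x r ⊆ D := fun y hy => hball (ball_subset_closedBall hy)
        filter_upwards [ae_restrict_mem measurableSet_ball] with y hy
        have hFw : F i y ≤ w y := (hw y (hsub hy)).1 ⟨i, rfl⟩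
        have : max (F i y) (-M) ≤ max (w y) (-M) := max_le_max hFw le_rfl
        linarith
    calc w x + M ≤ max (F i x) (-M) + M + ε := h1
      _ ≤ (K / (unitBallVol (EuclideanSpace ℝ (Fin N)) * r ^ N)) *
          (∫ y in ball x r, (max (F i y) (-M) + M)) + ε := by linarith
      _ ≤ (K / (unitBallVol (EuclideanSpace ℝ (Fin N)) * r ^ N)) *
          (∫ y in ball x r, (max (w y) (-M) + M)) + ε := by
            have := mul_le_mul_of_nonneg_left h3 hc.le
            linarith
end

section
/- If u : D → [−∞, +∞) is K-quasi-nearly subharmonic n.s. on a domain D ⊆ ℝ^N and u is not identically −∞, then u is finite almost everywhere in D and u is locally integrable in D. -/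
open MeasureTheory Metric Set
open scoped ENNReal

/-- The negative part of an extended real number, as an element of `[0, ∞]`. -/
noncomputable def erealNegPart (x : EReal) : ℝ≥0∞ :=
  if x = ⊥ then ⊤ else ENNReal.ofReal (-(x.toReal))

/-- The integral `∫_{B(x,r)} u dm ∈ [−∞, ∞)` of a function `u` with values in `[−∞, ∞)`
whose positive part is integrable: the (finite) integral of the positive part minus the
(possibly infinite) integral of the negative part. -/
noncomputable def erealBallIntegral {E : Type*} [NormedAddCommGroup E] [MeasureSpace E]
    (u : E → EReal) (x : E) (r : ℝ) : EReal :=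
  ((∫ y in ball x r, (max (u y) 0).toReal : ℝ) : EReal) -
    (∫⁻ y in ball x r, erealNegPart (u y)).toEReal

/-- `u : D → [−∞, ∞)` is `K`-quasi-nearly subharmonic n.s. on `D` in dimension `N`. -/
def IsQNSnsE {E : Type*} [NormedAddCommGroup E] [MeasureSpace E]
    (N : ℕ) (K : ℝ) (D : Set E) (u : E → EReal) : Prop :=
  Measurable u ∧ (∀ x, u x ≠ ⊤) ∧
  LocallyIntegrableOn (fun x => (max (u x) 0).toReal) D ∧
  ∀ x : E, ∀ r : ℝ, 0 < r → closedBall x r ⊆ D →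
    u x ≤ ((K / (unitBallVol E * r ^ N) : ℝ) : EReal) * erealBallIntegral u x r

/-- `u : D → [−∞, ∞)` is subharmonic on `D` in dimension `N`: upper semicontinuous on `D`,
never `+∞`, and satisfying the sub-mean-value inequality on closed balls in `D`
(`u ≡ −∞` is allowed). -/
def IsSubharmonicOn {E : Type*} [NormedAddCommGroup E] [MeasureSpace E]
    (N : ℕ) (D : Set E) (u : E → EReal) : Prop :=
  UpperSemicontinuousOn u D ∧ (∀ x, u x ≠ ⊤) ∧
  ∀ x : E, ∀ r : ℝ, 0 < r → closedBall x r ⊆ D →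
    u x ≤ ((1 / (unitBallVol E * r ^ N) : ℝ) : EReal) * erealBallIntegral u x r

lemma measurable_erealNegPart : Measurable erealNegPart := by
  have h : MeasurableSet {x : EReal | x = ⊥} := by
    simpa using measurableSet_singleton (⊥ : EReal)
  exact Measurable.ite h measurable_const
    (ENNReal.measurable_ofReal.comp measurable_ereal_toReal.neg)

lemma unitBallVol_pos (N : ℕ) : 0 < unitBallVol (EuclideanSpace ℝ (Fin N)) :=
  ENNReal.toReal_pos (measure_ball_pos volume 0 one_pos).ne' measure_ball_lt_top.ne

lemma finite_negint_of_ne_bot {N : ℕ} {K : ℝ} (hK : 1 ≤ K)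
    {D : Set (EuclideanSpace ℝ (Fin N))} {u : EuclideanSpace ℝ (Fin N) → EReal}
    (hu : IsQNSnsE N K D u) {x : EuclideanSpace ℝ (Fin N)} (hx : u x ≠ ⊥)
    {r : ℝ} (hr : 0 < r) (hball : closedBall x r ⊆ D) :
    (∫⁻ y in ball x r, erealNegPart (u y)) ≠ ⊤ := by
  intro htop
  have hpos : (0:ℝ) < K / (unitBallVol (EuclideanSpace ℝ (Fin N)) * r ^ N) :=
    div_pos (lt_of_lt_of_le one_pos hK) (mul_pos (unitBallVol_pos N) (pow_pos hr N))
  have hle := hu.2.2.2 x r hr hball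
  rw [erealBallIntegral, htop] at hle
  rw [show ((⊤ : ℝ≥0∞).toEReal) = (⊤ : EReal) from rfl, EReal.sub_top,
    EReal.mul_bot_of_pos (by exact_mod_cast hpos)] at hle
  exact hx (le_bot_iff.mp hle)

lemma null_bot_on_ball {E : Type*} [NormedAddCommGroup E] [MeasureSpace E]
    {u : E → EReal} (hum : Measurable u) {x : E} {r : ℝ}
    (hP : (∫⁻ y in ball x r, erealNegPart (u y)) ≠ ⊤) :
    volume ({z | u z = ⊥} ∩ ball x r) = 0 := by
  have hae := ae_lt_top (measurable_erealNegPart.comp hum) hP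
  have h0 : (volume.restrict (ball x r)) {z | ¬ erealNegPart (u z) < ⊤} = 0 := hae
  have hsub : {z | u z = ⊥} ⊆ {z | ¬ erealNegPart (u z) < ⊤} := by
    intro z hz
    simp [erealNegPart, hz]
  have hS : MeasurableSet {z | u z = ⊥} := hum (measurableSet_singleton (⊥ : EReal))
  refine le_antisymm ?_ zero_le
  calc volume ({z | u z = ⊥} ∩ ball x r)
      = (volume.restrict (ball x r)) {z | u z = ⊥} := (Measure.restrict_apply hS).symm
    _ ≤ (volume.restrict (ball x r)) {z | ¬ erealNegPart (u z) < ⊤} := measure_mono hsub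
    _ = 0 := h0

lemma integrableOn_toReal_ball {E : Type*} [NormedAddCommGroup E] [MeasureSpace E]
    {u : E → EReal} (hum : Measurable u) (hut : ∀ x, u x ≠ ⊤) {x : E} {r : ℝ}
    (hpos : IntegrableOn (fun y => (max (u y) 0).toReal) (ball x r) volume)
    (hneg : (∫⁻ y in ball x r, erealNegPart (u y)) ≠ ⊤) :
    IntegrableOn (fun y => (u y).toReal) (ball x r) volume := by
  have hbd : ∀ y, (‖(u y).toReal‖₊ : ℝ≥0∞) ≤
      ENNReal.ofReal ((max (u y) 0).toReal) + erealNegPart (u y) := by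
    intro y
    by_cases hb : u y = ⊥
    · simp [hb]
    · have hcoe : ((u y).toReal : EReal) = u y := EReal.coe_toReal (hut y) hb
      set t := (u y).toReal with htdef
      have hnegp : erealNegPart (u y) = ENNReal.ofReal (-t) := by
        simp [erealNegPart, hb, htdef]
      rcases le_total t 0 with h | h
      · have hmax : max (u y) 0 = 0 := max_eq_right (by rw [← hcoe]; exact_mod_cast h)
        rw [hmax, hnegp, ← enorm_eq_nnnorm, Real.enorm_eq_ofReal_abs, abs_of_nonpos h]
        simp
      · have hmax : max (u y) 0 = u y := max_eq_left (by rw [← hcoe]; exact_mod_cast h)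
        rw [hmax, ← enorm_eq_nnnorm, Real.enorm_eq_ofReal_abs, abs_of_nonneg h]
        exact le_add_right le_rfl
  constructor
  · exact (measurable_ereal_toReal.comp hum).aestronglyMeasurable
  · have hfin1 : (∫⁻ y in ball x r, ENNReal.ofReal ((max (u y) 0).toReal)) < ⊤ := by
      refine lt_of_le_of_lt (lintegral_mono fun y => Real.ofReal_le_enorm _) ?_
      exact hpos.hasFiniteIntegral
    calc (∫⁻ y in ball x r, ‖(u y).toReal‖₊)
        ≤ ∫⁻ y in ball x r, (ENNReal.ofReal ((max (u y) 0).toReal) + erealNegPart (u y)) :=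
          lintegral_mono fun y => hbd y
      _ = (∫⁻ y in ball x r, ENNReal.ofReal ((max (u y) 0).toReal)) +
          (∫⁻ y in ball x r, erealNegPart (u y)) :=
          lintegral_add_right _ (measurable_erealNegPart.comp hum)
      _ < ⊤ := ENNReal.add_lt_top.mpr ⟨hfin1, lt_top_iff_ne_top.mpr hneg⟩


/-- a `K`-quasi-nearly subharmonic n.s. function `u : D → [−∞, ∞)` that is
not identically `−∞` is finite almost everywhere in `D` and locally integrable in `D`. -/
theorem stmt_5 {N : ℕ} (hN : 2 ≤ N) {K : ℝ} (hK : 1 ≤ K)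
    (D : Set (EuclideanSpace ℝ (Fin N))) (hDo : IsOpen D) (hDc : IsConnected D)
    (u : EuclideanSpace ℝ (Fin N) → EReal)
    (hu : IsQNSnsE N K D u)
    (hne : ¬ ∀ x ∈ D, u x = ⊥) :
    (∀ᵐ x ∂(volume.restrict D), u x ≠ ⊥ ∧ u x ≠ ⊤) ∧
      LocallyIntegrableOn (fun x => (u x).toReal) D := by
  obtain ⟨humeas, hutop, huloc, hineq⟩ := id hu
  push_neg at hne
  obtain ⟨x₀, hx₀D, hx₀⟩ := hne
  set A : Set (EuclideanSpace ℝ (Fin N)) :=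
    {x | ∃ r : ℝ, 0 < r ∧ closedBall x r ⊆ D ∧
      (∫⁻ y in ball x r, erealNegPart (u y)) ≠ ⊤} with hA
  have hAopen : IsOpen A := by
    rw [Metric.isOpen_iff]
    rintro x ⟨r, hr, hcb, hP⟩
    refine ⟨r/2, half_pos hr, fun y hy => ⟨r/2, half_pos hr, ?_, ?_⟩⟩
    · refine (closedBall_subset_closedBall' ?_).trans hcb
      have := mem_ball.mp hy
      linarith
    · intro h
      apply hP
      refine top_le_iff.mp (h ▸ lintegral_mono_set (ball_subset_ball' ?_))
      have := mem_ball.mp hy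
      linarith
  have hBopen : IsOpen (D \ A) := by
    rw [Metric.isOpen_iff]
    rintro x ⟨hxD, hxA⟩
    obtain ⟨ε, hε, hball⟩ := Metric.isOpen_iff.mp hDo x hxD
    set d := ε/2 with hddef
    have hd : 0 < d := half_pos hε
    have hcb : closedBall x d ⊆ D := (closedBall_subset_ball (half_lt_self hε)).trans hball
    refine ⟨d/4, by positivity, fun y hy => ⟨?_, ?_⟩⟩
    · exact hcb (ball_subset_closedBall (ball_subset_ball (by linarith) hy))
    · rintro ⟨ry, hry, hycb, hyP⟩
      apply hxA
      have hZne : (ball y ry ∩ ball x (d/4)).Nonempty := ⟨y, mem_ball_self hry, hy⟩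
      have hZpos : 0 < volume (ball y ry ∩ ball x (d/4)) :=
        (isOpen_ball.inter isOpen_ball).measure_pos volume hZne
      have hnull := null_bot_on_ball humeas hyP
      have hex : ∃ z ∈ ball y ry ∩ ball x (d/4), u z ≠ ⊥ := by
        by_contra hcon
        push_neg at hcon
        have hsub : ball y ry ∩ ball x (d/4) ⊆ {z | u z = ⊥} ∩ ball y ry :=
          fun z hz => ⟨hcon z hz, hz.1⟩
        exact absurd (measure_mono_null hsub hnull) hZpos.ne'
      obtain ⟨z, ⟨hzY, hzX⟩, hz⟩ := hex
      have hzx : dist z x < d/4 := mem_ball.mp hzX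
      have hcz : closedBall z (d/2) ⊆ D := by
        refine (closedBall_subset_closedBall' ?_).trans hcb
        linarith
      have hPz := finite_negint_of_ne_bot hK hu hz (by positivity) hcz
      refine ⟨d/4, by positivity, (closedBall_subset_closedBall (by linarith)).trans hcb, ?_⟩
      intro h
      apply hPz
      refine top_le_iff.mp (h ▸ lintegral_mono_set (ball_subset_ball' ?_))
      rw [dist_comm]
      linarith
  have hDA : D ⊆ A := by
    by_contra hsub
    obtain ⟨x, hxD, hxA⟩ : ∃ x ∈ D, x ∉ A := by
      by_contra h
      push_neg at h
      exact hsub h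
    have hAx₀ : x₀ ∈ A := by
      obtain ⟨ε, hε, hball⟩ := Metric.isOpen_iff.mp hDo x₀ hx₀D
      have hcb : closedBall x₀ (ε/2) ⊆ D :=
        (closedBall_subset_ball (half_lt_self hε)).trans hball
      exact ⟨ε/2, half_pos hε, hcb, finite_negint_of_ne_bot hK hu hx₀ (half_pos hε) hcb⟩
    obtain ⟨w, hwD, hwA, hwB⟩ := hDc.isPreconnected A (D \ A) hAopen hBopen
      (fun z hz => (em (z ∈ A)).imp id fun h => ⟨hz, h⟩)
      ⟨x₀, hx₀D, hAx₀⟩ ⟨x, hxD, hxD, hxA⟩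
    exact hwB.2 hwA
  constructor
  · refine Filter.Eventually.and ?_ (Filter.Eventually.of_forall fun x => hutop x)
    have hS : MeasurableSet {z | u z = ⊥} := humeas (measurableSet_singleton (⊥ : EReal))
    rw [ae_iff]
    have hset : {x | ¬ u x ≠ ⊥} = {x | u x = ⊥} := by simp
    rw [hset, Measure.restrict_apply hS]
    apply measure_null_of_locally_null
    rintro x ⟨hxB, hxD⟩
    obtain ⟨r, hr, hcb, hP⟩ := hDA hxD
    refine ⟨({z | u z = ⊥} ∩ D) ∩ ball x r,
      inter_mem_nhdsWithin _ (ball_mem_nhds x hr), ?_⟩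
    refine measure_mono_null ?_ (null_bot_on_ball humeas hP)
    intro z hz
    exact ⟨hz.1.1, hz.2⟩
  · intro x hx
    obtain ⟨r, hr, hcb, hP⟩ := hDA hx
    have hposInt : IntegrableOn (fun y => (max (u y) 0).toReal) (ball x r) volume :=
      (huloc.integrableOn_compact_subset hcb (isCompact_closedBall x r)).mono_set
        ball_subset_closedBall
    exact ⟨ball x r, mem_nhdsWithin_of_mem_nhds (ball_mem_nhds x hr),
      integrableOn_toReal_ball humeas hutop hposInt hP⟩
end

section
/- (Key quantitative bound, Lemma 3.4) Let K ≥ 1, and let φ, ψ : [0,∞) → [0,∞) be increasing functions with natural numbers s₀ < s₁ such that: (i) φ⁻¹ and ψ⁻¹ are defined on [min{φ(s₁−s₀), ψ(s₁−s₀)}, ∞); (ii) 2K(ψ⁻¹∘φ)(s−s₀) ≤ (ψ⁻¹∘φ)(s) for all s ≥ s₁; (iii) Σ_{j≥s₁+1} [ ((ψ⁻¹∘φ)(j+1)/(ψ⁻¹∘φ)(j)) · (1/φ(j−s₀)) ]^{1/(N−1)} < ∞. Let u : D → [0,∞) be K-quasi-nearly subharmonic, and fix an integer š₁ ≥ s₁.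 Then for every x ∈ D and r > 0 with the closed ball B(x,r) ⊆ D, either u(x) ≤ (ψ⁻¹∘φ)(š₁+1), or Φ(u(x)) ≤ (C/r^N) ∫_{B(x,r)} ψ(u(y)) dm_N(y), where C = C(N,K,s₀) and for t with (ψ⁻¹∘φ)(j₀) ≤ t < (ψ⁻¹∘φ)(j₀+1), j₀ ≥ s₁+1, one sets Φ(t) := ( Σ_{j≥j₀} [ ((ψ⁻¹∘φ)(j+1)/(ψ⁻¹∘φ)(j)) / φ(j−s₀) ]^{1/(N−1)} )^{1−N}. -/
open MeasureTheory Metric Set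

set_option maxHeartbeats 1000000 in
/-- key quantitative bound, Lemma 3.4. Here `g` plays the role of
`ψ⁻¹ ∘ φ` (this is expressed by the hypothesis `ψ (g s) = φ s`). Under the hypotheses
(i) (encoded via `g`), (ii) and (iii) of Lemma 3.4, for every `x ∈ D` and `r > 0` with
`closedBall x r ⊆ D`, either `u x ≤ g (t₁ + 1)` or
`Φ (u x) ≤ (C / r^N) ∫_{B(x,r)} ψ (u y) dy`, where `C = C(N, K, s₀)` and
`Φ (t) = (∑_{j ≥ j₀} [ (g (j+1) / g j) / φ (j − s₀) ]^{1/(N−1)})^{1−N}` for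
`g j₀ ≤ t < g (j₀ + 1)`, `j₀ ≥ s₁ + 1`. -/
theorem stmt_8 {N : ℕ} (hN : 2 ≤ N) {K : ℝ} (hK : 1 ≤ K)
    (D : Set (EuclideanSpace ℝ (Fin N))) (hDo : IsOpen D) (hDc : IsConnected D)
    (s₀ s₁ : ℕ) (hs : s₀ < s₁)
    (φ ψ : ℝ → ℝ) (hφmono : MonotoneOn φ (Set.Ici 0)) (hψmono : MonotoneOn ψ (Set.Ici 0))
    (hφ0 : ∀ s : ℝ, 0 ≤ s → 0 ≤ φ s) (hψ0 : ∀ s : ℝ, 0 ≤ s → 0 ≤ ψ s)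
    (hφpos : ∀ s : ℝ, (s₁ : ℝ) - s₀ ≤ s → 0 < φ s)
    -- `g = ψ⁻¹ ∘ φ` : `g` is increasing, nonnegative, positive from `s₁ − s₀` on,
    -- and `ψ ∘ g = φ` on `[s₁ − s₀, ∞)` (this encodes hypothesis (i))
    (g : ℝ → ℝ) (hgmono : MonotoneOn g (Set.Ici 0)) (hg0 : ∀ s : ℝ, 0 ≤ s → 0 ≤ g s)
    (hgpos : ∀ s : ℝ, (s₁ : ℝ) - s₀ ≤ s → 0 < g s)
    (hψg : ∀ s : ℝ, (s₁ : ℝ) - s₀ ≤ s → ψ (g s) = φ s)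
    -- hypothesis (ii)
    (hii : ∀ s : ℝ, (s₁ : ℝ) ≤ s → 2 * K * g (s - s₀) ≤ g s)
    -- hypothesis (iii)
    (hiii : Summable (fun j : ℕ =>
      (g ((s₁ : ℝ) + 1 + j + 1) / g ((s₁ : ℝ) + 1 + j) / φ ((s₁ : ℝ) + 1 + j - s₀)) ^
        ((1 : ℝ) / (N - 1))))
    (u : EuclideanSpace ℝ (Fin N) → ℝ) (hu0 : ∀ x, 0 ≤ u x)
    (hu : IsQNSns N K D u)
    (t₁ : ℕ) (ht₁ : s₁ ≤ t₁) :
    ∃ C : ℝ, 0 < C ∧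
      ∀ x : EuclideanSpace ℝ (Fin N), ∀ r : ℝ, 0 < r → closedBall x r ⊆ D →
        u x ≤ g ((t₁ : ℝ) + 1) ∨
        ∀ j₀ : ℕ, s₁ + 1 ≤ j₀ → g (j₀ : ℝ) ≤ u x → u x < g ((j₀ : ℝ) + 1) →
          (∑' j : ℕ,
              (g ((j₀ : ℝ) + j + 1) / g ((j₀ : ℝ) + j) / φ ((j₀ : ℝ) + j - s₀)) ^
                ((1 : ℝ) / (N - 1))) ^ (1 - (N : ℝ))
            ≤ C / r ^ N * ∫ y in ball x r, ψ (u y) := by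
  classical
  have hNpos : 0 < N := by omega
  have hN1 : (1 : ℝ) < (N : ℝ) := by exact_mod_cast by omega
  have hNne : (N : ℝ) ≠ 0 := by positivity
  have hNm1 : (0 : ℝ) < (N : ℝ) - 1 := by linarith
  have hK0 : (0 : ℝ) < K := by linarith
  set ν : ℝ := unitBallVol (EuclideanSpace ℝ (Fin N)) with hνdef
  have hν : 0 < ν := by
    rw [hνdef, unitBallVol]
    obtain ⟨M, rfl⟩ : ∃ M, N = M + 1 := ⟨N - 1, by omega⟩
    exact ENNReal.toReal_pos (measure_ball_pos _ _ one_pos).ne' measure_ball_lt_top.ne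
  have hvol : ∀ (z : EuclideanSpace ℝ (Fin N)) (ρ : ℝ), 0 ≤ ρ →
      (volume (ball z ρ)).toReal = ν * ρ ^ N := by
    rw [hνdef, unitBallVol]
    obtain ⟨M, rfl⟩ : ∃ M, N = M + 1 := ⟨N - 1, by omega⟩
    intro z ρ hρ
    have h := Measure.addHaar_ball (volume : Measure (EuclideanSpace ℝ (Fin (M+1)))) z hρ
    rw [finrank_euclideanSpace_fin] at h
    rw [h, ENNReal.toReal_mul, ENNReal.toReal_ofReal (by positivity), mul_comm]
  clear_value ν
  -- s₀ ≥ 1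
  have hs₀1 : 1 ≤ s₀ := by
    by_contra h
    have hs0 : s₀ = 0 := by omega
    have h2 : 0 < g ((s₁ : ℝ)) := hgpos _ (by simp)
    have h1 := hii (s₁ : ℝ) le_rfl
    rw [hs0] at h1
    push_cast at h1
    rw [sub_zero] at h1
    nlinarith
  have hmeasu : Measurable u := hu.1
  have hqns := hu.2.2
  have hloc : LocallyIntegrableOn u D := by
    have h := hu.2.1
    have : (fun x => max (u x) 0) = u := funext fun y => max_eq_left (hu0 y)
    rwa [this] at h
  -- the sequence a
  set a : ℕ → ℝ := fun k : ℕ =>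
    (g ((k : ℝ) + 1) / g (k : ℝ) / φ ((k : ℝ) - s₀)) ^ ((1 : ℝ) / ((N : ℝ) - 1)) with hadef
  have hasummable : Summable a := by
    have h1 : Summable (fun j : ℕ => a (j + (s₁ + 1))) := by
      refine hiii.congr ?_
      intro j
      simp only [hadef]
      push_cast
      ring_nf
    exact (summable_nat_add_iff (s₁ + 1)).mp h1
  have hapos : ∀ k : ℕ, s₁ + 1 ≤ k → 0 < a k := by
    intro k hk
    have hk1 : (s₁ : ℝ) ≤ (k : ℝ) := by exact_mod_cast by omega
    have hs₀0 : (0:ℝ) ≤ (s₀ : ℝ) := by positivity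
    have h1 : 0 < g ((k : ℝ) + 1) := hgpos _ (by linarith)
    have h2 : 0 < g ((k : ℝ)) := hgpos _ (by linarith)
    have h3 : 0 < φ ((k : ℝ) - s₀) := hφpos _ (by linarith)
    simp only [hadef]
    positivity
  -- the constant
  refine ⟨4 * K * ((s₀ : ℝ) + 1) / ν, by positivity, ?_⟩
  intro x r hr hsubD
  refine Or.inr fun j₀ hj₀ hlo hhi => ?_
  have hj₀R : (s₁ : ℝ) + 1 ≤ (j₀ : ℝ) := by exact_mod_cast hj₀
  have hs₀R : (1 : ℝ) ≤ (s₀ : ℝ) := by exact_mod_cast hs₀1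
  have hs₀s₁ : (s₀ : ℝ) < (s₁ : ℝ) := by exact_mod_cast hs
  -- rewrite the goal sum
  have hgoal_eq : (∑' j : ℕ,
      (g ((j₀ : ℝ) + j + 1) / g ((j₀ : ℝ) + j) / φ ((j₀ : ℝ) + j - s₀)) ^
        ((1 : ℝ) / ((N : ℝ) - 1))) = ∑' j : ℕ, a (j₀ + j) := by
    refine tsum_congr fun j => ?_
    simp only [hadef]
    push_cast
    ring_nf
  rw [hgoal_eq]
  set A : ℝ := ∑' j : ℕ, a (j₀ + j) with hAdef
  have hAs : Summable (fun j : ℕ => a (j₀ + j)) :=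
    ((summable_nat_add_iff j₀).mpr hasummable).congr fun j => by rw [add_comm]
  have hApos : 0 < A := by
    rw [hAdef]
    exact Summable.tsum_pos hAs (fun j => (hapos _ (by omega)).le) 0 (hapos _ (by omega))
  -- basic positivity facts along the sequence
  have hgk : ∀ j : ℕ, j₀ ≤ j → 0 < g ((j : ℝ)) ∧ 0 < g ((j : ℝ) + 1) ∧
      0 < φ ((j : ℝ) - s₀) ∧ 0 ≤ g ((j : ℝ) - s₀) ∧ (s₁ : ℝ) ≤ (j : ℝ) := by
    intro j hj
    have hjR : (j₀ : ℝ) ≤ (j : ℝ) := by exact_mod_cast hj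
    have hs₀0 : (0:ℝ) ≤ (s₀ : ℝ) := by positivity
    refine ⟨hgpos _ (by linarith), hgpos _ (by linarith), hφpos _ (by linarith),
      hg0 _ (by linarith), by linarith⟩
  -- integrability of u on the closed ball
  have hInt_u : IntegrableOn u (closedBall x r) :=
    hloc.integrableOn_compact_subset hsubD (isCompact_closedBall x r)
  -- enlarged ball inside D and uniform bound M
  obtain ⟨δ, hδpos, hδsub⟩ : ∃ δ > 0, closedBall x (r + δ) ⊆ D := by
    obtain ⟨δ, hδpos, h⟩ := (isCompact_closedBall x r).exists_cthickening_subset_open hDo hsubD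
    refine ⟨δ, hδpos, ?_⟩
    refine Set.Subset.trans ?_ h
    rw [cthickening_closedBall hδpos.le hr.le, add_comm δ r]
  have hIntBig : IntegrableOn u (closedBall x (r + δ)) :=
    hloc.integrableOn_compact_subset hδsub (isCompact_closedBall x (r + δ))
  set M : ℝ := K / (ν * δ ^ N) * ∫ y in closedBall x (r + δ), u y with hMdef
  have hM : ∀ y ∈ closedBall x r, u y ≤ M := by
    intro y hy
    have h1 : closedBall y δ ⊆ closedBall x (r + δ) :=
      closedBall_subset_closedBall' (by have := mem_closedBall.mp hy; linarith)
    have hq := hqns y δ hδpos (h1.trans hδsub)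
    rw [← hνdef] at hq
    refine hq.trans ?_
    rw [hMdef]
    refine mul_le_mul_of_nonneg_left ?_ (by positivity)
    exact setIntegral_mono_set hIntBig (Filter.Eventually.of_forall fun y => hu0 y)
      (HasSubset.Subset.eventuallyLE (ball_subset_closedBall.trans h1))
  have hMx : 0 ≤ M := le_trans (hu0 x) (hM x (mem_closedBall_self hr.le))
  -- measurability and integrability of ψ ∘ u
  have hψu_meas : Measurable fun y => ψ (u y) := by
    have hmono : Monotone fun t : ℝ => ψ (max t 0) := fun t t' htt' =>
      hψmono (le_max_right t 0) (le_max_right t' 0) (max_le_max htt' le_rfl)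
    have heq : (fun y => ψ (u y)) = (fun t : ℝ => ψ (max t 0)) ∘ u := by
      funext y; simp [max_eq_left (hu0 y)]
    rw [heq]; exact hmono.measurable.comp hmeasu
  have hI_int : IntegrableOn (fun y => ψ (u y)) (ball x r) := by
    refine Integrable.mono' (g := fun _ => ψ M)
      (integrableOn_const measure_ball_lt_top.ne)
      hψu_meas.aestronglyMeasurable ?_
    refine (ae_restrict_iff' measurableSet_ball).mpr (Filter.Eventually.of_forall ?_)
    intro y hy
    rw [Real.norm_eq_abs, abs_of_nonneg (hψ0 _ (hu0 y))]
    exact hψmono (hu0 y) hMx (hM y (ball_subset_closedBall hy))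
  set I : ℝ := ∫ y in ball x r, ψ (u y) with hIdef
  have hI0 : 0 ≤ I :=
    setIntegral_nonneg measurableSet_ball fun y _ => hψ0 _ (hu0 y)
  -- annulus sets
  set S : ℕ → Set (EuclideanSpace ℝ (Fin N)) := fun j =>
    ball x r ∩ {y | g ((j : ℝ) - s₀) ≤ u y ∧ u y < g ((j : ℝ) + 1)} with hSdef
  have hSmeas : ∀ j, MeasurableSet (S j) := by
    intro j
    exact measurableSet_ball.inter
      ((measurableSet_le measurable_const hmeasu).inter
        (measurableSet_lt hmeasu measurable_const))
  have hSfin : ∀ j, volume (S j) ≠ ⊤ := fun j =>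
    (lt_of_le_of_lt (measure_mono Set.inter_subset_left) measure_ball_lt_top).ne
  set m : ℕ → ℝ := fun j => (volume (S j)).toReal with hmdef
  have hm0 : ∀ j, 0 ≤ m j := fun j => ENNReal.toReal_nonneg
  -- overlap bound
  have key2 : ∀ s : Finset ℕ, (∀ j ∈ s, j₀ ≤ j) →
      ∑ j ∈ s, φ ((j : ℝ) - s₀) * m j ≤ ((s₀ : ℝ) + 1) * I := by
    intro s hsmem
    have h1 : ∀ j ∈ s, φ ((j : ℝ) - s₀) * m j ≤
        ∫ y in ball x r, (S j).indicator (fun y => ψ (u y)) y := by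
      intro j hj
      obtain ⟨hg1, hg2, hφ1, hg3, hjs₁⟩ := hgk j (hsmem j hj)
      rw [setIntegral_indicator (hSmeas j),
        Set.inter_eq_self_of_subset_right Set.inter_subset_left]
      have h2 : ∫ y in S j, φ ((j : ℝ) - s₀) ≤ ∫ y in S j, ψ (u y) := by
        refine setIntegral_mono_on
          (integrableOn_const (hSfin j))
          (hI_int.mono_set Set.inter_subset_left) (hSmeas j) ?_
        intro y hy
        have hy2 := hy.2.1
        rw [← hψg ((j : ℝ) - s₀) (by linarith [hgk j (hsmem j hj)])]
        exact hψmono hg3 (hg3.trans hy2) hy2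
      rw [setIntegral_const, smul_eq_mul, mul_comm] at h2
      exact h2
    calc ∑ j ∈ s, φ ((j : ℝ) - s₀) * m j
        ≤ ∑ j ∈ s, ∫ y in ball x r, (S j).indicator (fun y => ψ (u y)) y :=
          Finset.sum_le_sum h1
      _ = ∫ y in ball x r, ∑ j ∈ s, (S j).indicator (fun y => ψ (u y)) y :=
          (integral_finset_sum s fun j _ => hI_int.indicator (hSmeas j)).symm
      _ ≤ ∫ y in ball x r, ((s₀ : ℝ) + 1) * ψ (u y) := by
          refine setIntegral_mono_on
            (integrable_finset_sum s fun j _ => hI_int.indicator (hSmeas j))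
            (hI_int.const_mul _) measurableSet_ball ?_
          intro y hy
          have hψy : 0 ≤ ψ (u y) := hψ0 _ (hu0 y)
          rw [Finset.sum_indicator_eq_sum_filter]
          rw [Finset.sum_const, nsmul_eq_mul]
          set T := s.filter fun j => y ∈ S j with hTdef
          have hcard : T.card ≤ s₀ + 1 := by
            rcases T.eq_empty_or_nonempty with h | h
            · simp [h]
            · have hjm := T.min'_mem h
              have hsubT : T ⊆ Finset.Icc (T.min' h) (T.min' h + s₀) := by
                intro j hjT
                rw [Finset.mem_Icc]
                refine ⟨T.min'_le j hjT, ?_⟩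
                by_contra hcon
                push_neg at hcon
                have hyj : y ∈ S j := (Finset.mem_filter.mp hjT).2
                have hyjm : y ∈ S (T.min' h) := (Finset.mem_filter.mp hjm).2
                have hjmj₀ : j₀ ≤ T.min' h := hsmem _ (Finset.mem_filter.mp hjm).1
                have hjj₀ : j₀ ≤ j := hsmem _ (Finset.mem_filter.mp hjT).1
                have hc1 : ((T.min' h : ℝ)) + 1 ≤ (j : ℝ) - s₀ := by
                  have : ((T.min' h : ℕ)) + 1 + s₀ ≤ j := by omega
                  have := (Nat.cast_le (α := ℝ)).mpr this
                  push_cast at this ⊢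
                  linarith
                have hmem1 : ((T.min' h : ℝ)) + 1 ∈ Set.Ici (0:ℝ) := by
                  simp only [Set.mem_Ici]; positivity
                have hmem2 : (j : ℝ) - s₀ ∈ Set.Ici (0:ℝ) := by
                  simp only [Set.mem_Ici]
                  have hss : (s₀:ℝ) + 1 ≤ (j:ℝ) := by linarith [hmem1.out, hc1]
                  linarith
                have h4 : g ((T.min' h : ℝ) + 1) ≤ g ((j : ℝ) - s₀) :=
                  hgmono hmem1 hmem2 hc1
                have h5 := hyj.2.1
                have h6 := hyjm.2.2
                linarith
              calc T.card ≤ (Finset.Icc (T.min' h) (T.min' h + s₀)).card :=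
                    Finset.card_le_card hsubT
                _ = s₀ + 1 := by rw [Nat.card_Icc]; omega -- MARK
          have : (T.card : ℝ) ≤ (s₀ : ℝ) + 1 := by exact_mod_cast hcard
          exact mul_le_mul_of_nonneg_right this hψy
      _ = ((s₀ : ℝ) + 1) * I := by rw [hIdef, integral_const_mul]
  -- growth of g along multiples of s₀
  have hgrow : ∀ k : ℕ, (2 : ℝ) ^ k * g ((j₀ : ℝ)) ≤ g ((j₀ : ℝ) + (k : ℝ) * s₀) := by
    intro k
    induction k with
    | zero => simp
    | succ k ih =>
      have hs₀0 : (0:ℝ) ≤ (s₀ : ℝ) := by positivity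
      have hks : (0:ℝ) ≤ (k : ℝ) * s₀ := by positivity
      have hsle : (s₁ : ℝ) ≤ (j₀ : ℝ) + ((k : ℝ) + 1) * s₀ := by nlinarith
      have h1 := hii _ hsle
      have he : (j₀ : ℝ) + ((k : ℝ) + 1) * s₀ - s₀ = (j₀ : ℝ) + (k : ℝ) * s₀ := by ring
      rw [he] at h1
      have h2 : 0 ≤ g ((j₀ : ℝ) + (k : ℝ) * s₀) := hg0 _ (by positivity)
      have h3 : 0 ≤ (2:ℝ) ^ k * g ((j₀ : ℝ)) := by
        have := hg0 ((j₀:ℝ)) (by positivity); positivity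
      have h5 : g ((j₀ : ℝ) + (k : ℝ) * s₀) ≤ K * g ((j₀ : ℝ) + (k : ℝ) * s₀) :=
        le_mul_of_one_le_left h2 hK
      push_cast
      calc (2:ℝ) ^ (k+1) * g ((j₀:ℝ)) = 2 * ((2:ℝ)^k * g ((j₀:ℝ))) := by ring
        _ ≤ 2 * g ((j₀ : ℝ) + (k : ℝ) * s₀) := by linarith
        _ ≤ 2 * (K * g ((j₀ : ℝ) + (k : ℝ) * s₀)) := by linarith
        _ ≤ g ((j₀ : ℝ) + ((k : ℝ) + 1) * s₀) := by linarith
  -- the radii basic parts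
  set c : ℕ → ℝ := fun j => (4 * K / ν * (g ((j : ℝ) + 1) / g ((j : ℝ))) * m j) ^ ((N : ℝ))⁻¹
    with hcdef
  have hcbase : ∀ j : ℕ, 0 ≤ 4 * K / ν * (g ((j : ℝ) + 1) / g ((j : ℝ))) * m j := by
    intro j
    have h1 : 0 ≤ g ((j : ℝ) + 1) := hg0 _ (by positivity)
    have h2 : 0 ≤ g ((j : ℝ)) := hg0 _ (by positivity)
    exact mul_nonneg (mul_nonneg (div_nonneg (mul_nonneg (by norm_num) hK0.le) hν.le)
      (div_nonneg h1 h2)) (hm0 j)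
  have hc0 : ∀ j, 0 ≤ c j := fun j => Real.rpow_nonneg (hcbase j) _
  have hcpow : ∀ j : ℕ, c j ^ N = 4 * K / ν * (g ((j : ℝ) + 1) / g ((j : ℝ))) * m j := by
    intro j
    rw [hcdef]
    exact Real.rpow_inv_natCast_pow (hcbase j) (by omega)
  -- the chain argument
  have key3 : ∀ ε : ℝ, 0 < ε →
      r < (4 * K / ν) ^ ((N : ℝ))⁻¹ * (((s₀ : ℝ) + 1) * I) ^ ((N : ℝ))⁻¹ *
        A ^ (((N : ℝ) - 1) / N) + ε := by
    intro ε hε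
    set ρ : ℕ → ℝ := fun j => c j + ε * (2⁻¹ : ℝ) ^ (j + 1) with hρdef
    have hρpos : ∀ j, 0 < ρ j := by
      intro j
      have := hc0 j
      have : (0:ℝ) < ε * (2⁻¹ : ℝ) ^ (j + 1) := by positivity
      simp only [hρdef]
      linarith [hc0 j]
    have hchain : ∃ J, r < ∑ j ∈ Finset.Icc j₀ J, ρ j := by
      by_contra hcon
      push_neg at hcon
      have H' : ∀ J, ∑ j ∈ Finset.Ico j₀ J, ρ j ≤ r := by
        intro J
        rcases le_or_gt J j₀ with h | h
        · rw [Finset.Ico_eq_empty (by omega)]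
          simpa using hr.le
        · obtain ⟨J', rfl⟩ : ∃ J', J = J' + 1 := ⟨J - 1, by omega⟩
          rw [Finset.Ico_add_one_right_eq_Icc]
          exact hcon J'
      -- the inductive step
      have step : ∀ j : ℕ, j₀ ≤ j → ∀ z, g ((j : ℝ)) ≤ u z →
          dist z x ≤ ∑ k ∈ Finset.Ico j₀ j, ρ k →
          ∃ z', g ((j : ℝ) + 1) ≤ u z' ∧ dist z' x ≤ ∑ k ∈ Finset.Ico j₀ (j + 1), ρ k := by
        intro j hj z hz hdist
        obtain ⟨hgj, hgj1, hφj, hgjs, hjs₁⟩ := hgk j hj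
        have hsum : dist z x + ρ j ≤ r := by
          have h2 := H' (j + 1)
          rw [Finset.sum_Ico_succ_top hj] at h2
          linarith
        by_cases hex : ∃ y ∈ ball z (ρ j), g ((j : ℝ) + 1) ≤ u y
        · obtain ⟨y, hy1, hy2⟩ := hex
          refine ⟨y, hy2, ?_⟩
          rw [Finset.sum_Ico_succ_top hj]
          have h3 := mem_ball.mp hy1
          have h4 := dist_triangle y z x
          linarith
        · push_neg at hex
          exfalso
          have hρj := hρpos j
          have hq := hqns z (ρ j) hρj
            ((closedBall_subset_closedBall' (by linarith)).trans hsubD)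
          rw [← hνdef] at hq
          have hballsub : ball z (ρ j) ⊆ ball x r := ball_subset_ball' (by linarith)
          have hballcb : ball z (ρ j) ⊆ closedBall x r :=
            hballsub.trans ball_subset_closedBall
          have hIntz : IntegrableOn u (ball z (ρ j)) := hInt_u.mono_set hballcb
          set F : Set (EuclideanSpace ℝ (Fin N)) :=
            ball z (ρ j) ∩ {y | g ((j : ℝ) - s₀) ≤ u y} with hFdef
          have hFmeas : MeasurableSet F :=
            measurableSet_ball.inter (measurableSet_le measurable_const hmeasu)
          have hFS : F ⊆ S j := by
            rintro y ⟨hy1, hy2⟩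
            exact ⟨hballsub hy1, hy2, hex y hy1⟩
          have hKgjs : K * g ((j : ℝ) - s₀) ≤ g ((j : ℝ)) / 2 := by
            have := hii ((j : ℝ)) hjs₁
            linarith
          have hIndInt : Integrable (F.indicator u) (volume.restrict (ball z (ρ j))) :=
            hIntz.indicator hFmeas
          have hconst : IntegrableOn (fun _ => g ((j : ℝ) - s₀)) (ball z (ρ j)) :=
            integrableOn_const measure_ball_lt_top.ne
          have hbound : ∫ y in ball z (ρ j), u y ≤
              g ((j : ℝ) - s₀) * (ν * ρ j ^ N) + g ((j : ℝ) + 1) * m j := by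
            have h1 : ∫ y in ball z (ρ j), u y ≤
                ∫ y in ball z (ρ j), (g ((j : ℝ) - s₀) + F.indicator u y) := by
              refine setIntegral_mono_on hIntz (hconst.add hIndInt) measurableSet_ball ?_
              intro y hy
              by_cases hyF : y ∈ F
              · rw [Set.indicator_of_mem hyF]
                linarith
              · have h5 : u y < g ((j : ℝ) - s₀) := by
                  by_contra hcon2
                  push_neg at hcon2
                  exact hyF ⟨hy, hcon2⟩
                rw [Set.indicator_of_notMem hyF]
                linarith
            have h2 : ∫ y in ball z (ρ j), (g ((j : ℝ) - s₀) + F.indicator u y)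
                = g ((j : ℝ) - s₀) * (ν * ρ j ^ N) + ∫ y in F, u y := by
              rw [integral_add hconst hIndInt, setIntegral_const, smul_eq_mul, measureReal_def,
                hvol z (ρ j) hρj.le, setIntegral_indicator hFmeas,
                Set.inter_eq_self_of_subset_right Set.inter_subset_left, ← hFdef]
              ring
            have h3 : ∫ y in F, u y ≤ g ((j : ℝ) + 1) * m j := by
              have hIntF : IntegrableOn u F := hIntz.mono_set Set.inter_subset_left
              have h6 : ∫ y in F, u y ≤ ∫ y in F, g ((j : ℝ) + 1) := by
                refine setIntegral_mono_on hIntF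
                  (integrableOn_const
                    ((lt_of_le_of_lt (measure_mono hFS) (hSfin j).lt_top)).ne) hFmeas ?_
                exact fun y hy => (hex y hy.1).le
              rw [setIntegral_const, smul_eq_mul] at h6
              refine h6.trans ?_
              rw [mul_comm (volume.real F)]
              exact mul_le_mul_of_nonneg_left
                (ENNReal.toReal_mono (hSfin j) (measure_mono hFS)) hgj1.le
            linarith
          have hρN : (0:ℝ) < ν * ρ j ^ N := by positivity
          have hq2 : g ((j : ℝ)) ≤ K / (ν * ρ j ^ N) *
              (g ((j : ℝ) - s₀) * (ν * ρ j ^ N) + g ((j : ℝ) + 1) * m j) :=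
            hz.trans (hq.trans (mul_le_mul_of_nonneg_left hbound (by positivity)))
          have hXeq : K / (ν * ρ j ^ N) * (g ((j : ℝ) - s₀) * (ν * ρ j ^ N))
              = K * g ((j : ℝ) - s₀) := by
            field_simp
          have hcN : 4 * K * (g ((j : ℝ) + 1) / g ((j : ℝ))) * m j ≤ ν * ρ j ^ N := by
            have h5 : c j ^ N ≤ ρ j ^ N := by
              refine pow_le_pow_left₀ (hc0 j) ?_ N
              simp only [hρdef]
              have : (0:ℝ) ≤ ε * (2⁻¹ : ℝ) ^ (j + 1) := by positivity
              linarith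
            have h6 := hcpow j
            have h7 : ν * c j ^ N = 4 * K * (g ((j : ℝ) + 1) / g ((j : ℝ))) * m j := by
              rw [h6]; field_simp
            nlinarith
          have htermB : K / (ν * ρ j ^ N) * (g ((j : ℝ) + 1) * m j) ≤ g ((j : ℝ)) / 4 := by
            rw [div_mul_eq_mul_div, div_le_iff₀ hρN]
            have h8 : g ((j : ℝ)) * (4 * K * (g ((j : ℝ) + 1) / g ((j : ℝ))) * m j)
                = 4 * K * (g ((j : ℝ) + 1) * m j) := by
              field_simp
            nlinarith [mul_le_mul_of_nonneg_left hcN hgj.le]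
          rw [mul_add, hXeq] at hq2
          linarith
      -- build the chain
      have chain : ∀ n : ℕ, ∃ z, g (((j₀ + n : ℕ) : ℝ)) ≤ u z ∧
          dist z x ≤ ∑ k ∈ Finset.Ico j₀ (j₀ + n), ρ k := by
        intro n
        induction n with
        | zero => exact ⟨x, by simpa using hlo, by simp⟩
        | succ n ih =>
          obtain ⟨z, hz1, hz2⟩ := ih
          obtain ⟨z', h1, h2⟩ := step (j₀ + n) (by omega) z hz1 hz2
          refine ⟨z', ?_, ?_⟩
          · push_cast at h1 ⊢
            convert h1 using 2 <;> ring
          · convert h2 using 3 <;> omega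
      -- contradiction with the uniform bound
      obtain ⟨k, hk⟩ : ∃ k : ℕ, M / g ((j₀ : ℝ)) < 2 ^ k :=
        pow_unbounded_of_one_lt _ one_lt_two
      have hgj₀pos : 0 < g ((j₀ : ℝ)) := (hgk j₀ le_rfl).1
      have hkM : M < 2 ^ k * g ((j₀ : ℝ)) := by
        rw [div_lt_iff₀ hgj₀pos] at hk
        linarith
      obtain ⟨z, hz1, hz2⟩ := chain (k * s₀)
      have hzin : z ∈ closedBall x r := mem_closedBall.mpr (hz2.trans (H' _))
      have h1 : u z ≤ M := hM z hzin
      have h2 := hgrow k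
      have h3 : (((j₀ + k * s₀ : ℕ)) : ℝ) = (j₀ : ℝ) + (k : ℝ) * s₀ := by push_cast; ring
      rw [h3] at hz1
      linarith
    -- Hölder estimate
    obtain ⟨J, hJ⟩ := hchain
    have hsplit : ∑ j ∈ Finset.Icc j₀ J, ρ j
        = ∑ j ∈ Finset.Icc j₀ J, c j + ∑ j ∈ Finset.Icc j₀ J, ε * (2⁻¹ : ℝ) ^ (j + 1) := by
      simp only [hρdef]
      rw [Finset.sum_add_distrib]
    have hεsum : ∑ j ∈ Finset.Icc j₀ J, ε * (2⁻¹ : ℝ) ^ (j + 1) ≤ ε := by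
      rw [← Finset.mul_sum]
      have hgeom : Summable fun j : ℕ => (2⁻¹ : ℝ) ^ j :=
        summable_geometric_of_lt_one (by norm_num) (by norm_num)
      have h1 : ∑ j ∈ Finset.Icc j₀ J, (2⁻¹ : ℝ) ^ (j + 1) ≤ ∑' j : ℕ, (2⁻¹ : ℝ) ^ (j + 1) :=
        Summable.sum_le_tsum _ (fun i _ => by positivity) ((summable_nat_add_iff 1).mpr hgeom)
      have h2 : ∑' j : ℕ, (2⁻¹ : ℝ) ^ (j + 1) = 1 := by
        calc ∑' j : ℕ, (2⁻¹ : ℝ) ^ (j + 1) = ∑' j : ℕ, 2⁻¹ * (2⁻¹ : ℝ) ^ j :=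
              tsum_congr fun j => by rw [pow_succ]; ring
          _ = 2⁻¹ * ∑' j : ℕ, (2⁻¹ : ℝ) ^ j := tsum_mul_left
          _ = 1 := by
              rw [tsum_geometric_of_lt_one (by norm_num) (by norm_num)]
              norm_num
      calc ε * ∑ j ∈ Finset.Icc j₀ J, (2⁻¹ : ℝ) ^ (j + 1) ≤ ε * 1 :=
            mul_le_mul_of_nonneg_left (h1.trans_eq h2) hε.le
        _ = ε := mul_one ε
    have hpq : Real.HolderConjugate (N : ℝ) ((N : ℝ) / ((N : ℝ) - 1)) := by
      exact (Real.holderConjugate_iff_eq_conjExponent hN1).mpr rfl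
    have haIcc : ∀ j ∈ Finset.Icc j₀ J, 0 < a j := fun j hj =>
      hapos j (by have := (Finset.mem_Icc.mp hj).1; omega)
    have hφmIcc : ∀ j ∈ Finset.Icc j₀ J, 0 ≤ φ ((j : ℝ) - s₀) * m j := fun j hj =>
      mul_nonneg (hgk j (Finset.mem_Icc.mp hj).1).2.2.1.le (hm0 j)
    have hcid : ∀ j ∈ Finset.Icc j₀ J, c j = (4 * K / ν) ^ ((N : ℝ))⁻¹ *
        ((φ ((j : ℝ) - s₀) * m j) ^ ((N : ℝ))⁻¹ * a j ^ (((N : ℝ) - 1) / N)) := by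
      intro j hj
      obtain ⟨hg1, hg2, hφ1, hg3, _⟩ := hgk j (Finset.mem_Icc.mp hj).1
      have hX0 : (0:ℝ) ≤ g ((j : ℝ) + 1) / g ((j : ℝ)) / φ ((j : ℝ) - s₀) := by positivity
      have haj : a j ^ (((N : ℝ) - 1) / N)
          = (g ((j : ℝ) + 1) / g ((j : ℝ)) / φ ((j : ℝ) - s₀)) ^ ((N : ℝ))⁻¹ := by
        simp only [hadef]
        rw [← Real.rpow_mul hX0]
        congr 1
        field_simp
      rw [haj, ← Real.mul_rpow (hφmIcc j hj) hX0,
        ← Real.mul_rpow (div_nonneg (mul_nonneg (by norm_num) hK0.le) hν.le)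
          (mul_nonneg (hφmIcc j hj) hX0)]
      simp only [hcdef]
      congr 1
      field_simp
    have hsum_a : ∑ j ∈ Finset.Icc j₀ J, a j ≤ A := by
      rw [← Finset.Ico_add_one_right_eq_Icc, Finset.sum_Ico_eq_sum_range]
      exact Summable.sum_le_tsum _ (fun i _ => (hapos _ (by omega)).le) hAs
    have hsum_a0 : (0:ℝ) ≤ ∑ j ∈ Finset.Icc j₀ J, a j :=
      Finset.sum_nonneg fun j hj => (haIcc j hj).le
    have hsum_φm : ∑ j ∈ Finset.Icc j₀ J, φ ((j : ℝ) - s₀) * m j ≤ ((s₀ : ℝ) + 1) * I :=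
      key2 _ fun j hj => (Finset.mem_Icc.mp hj).1
    have hsum_φm0 : (0:ℝ) ≤ ∑ j ∈ Finset.Icc j₀ J, φ ((j : ℝ) - s₀) * m j :=
      Finset.sum_nonneg hφmIcc
    have hHolder : ∑ j ∈ Finset.Icc j₀ J, c j ≤
        (4 * K / ν) ^ ((N : ℝ))⁻¹ *
          ((((s₀ : ℝ) + 1) * I) ^ ((N : ℝ))⁻¹ * A ^ (((N : ℝ) - 1) / N)) := by
      rw [Finset.sum_congr rfl hcid, ← Finset.mul_sum]
      refine mul_le_mul_of_nonneg_left ?_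
        (Real.rpow_nonneg (div_nonneg (mul_nonneg (by norm_num) hK0.le) hν.le) _)
      have hH := Real.inner_le_Lp_mul_Lq_of_nonneg (Finset.Icc j₀ J) hpq
        (f := fun j => (φ ((j : ℝ) - s₀) * m j) ^ ((N : ℝ))⁻¹)
        (g := fun j => a j ^ (((N : ℝ) - 1) / N))
        (fun j hj => Real.rpow_nonneg (hφmIcc j hj) _)
        (fun j hj => Real.rpow_nonneg (haIcc j hj).le _)
      refine hH.trans ?_
      have he1 : ∀ j ∈ Finset.Icc j₀ J,
          ((φ ((j : ℝ) - s₀) * m j) ^ ((N : ℝ))⁻¹) ^ (N : ℝ) = φ ((j : ℝ) - s₀) * m j := by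
        intro j hj
        rw [← Real.rpow_mul (hφmIcc j hj), inv_mul_cancel₀ hNne, Real.rpow_one]
      have he2 : ∀ j ∈ Finset.Icc j₀ J,
          (a j ^ (((N : ℝ) - 1) / N)) ^ ((N : ℝ) / ((N : ℝ) - 1)) = a j := by
        intro j hj
        rw [← Real.rpow_mul (haIcc j hj).le]
        rw [show ((N : ℝ) - 1) / N * ((N : ℝ) / ((N : ℝ) - 1)) = 1 by field_simp, Real.rpow_one]
      rw [Finset.sum_congr rfl he1, Finset.sum_congr rfl he2]
      refine mul_le_mul ?_ ?_ (Real.rpow_nonneg hsum_a0 _) (Real.rpow_nonneg ?_ _)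
      · rw [one_div]
        exact Real.rpow_le_rpow hsum_φm0 hsum_φm (by positivity)
      · rw [one_div_div]
        exact Real.rpow_le_rpow hsum_a0 hsum_a (by positivity)
      · exact mul_nonneg (by positivity) hI0
    calc r < ∑ j ∈ Finset.Icc j₀ J, ρ j := hJ
      _ = ∑ j ∈ Finset.Icc j₀ J, c j + ∑ j ∈ Finset.Icc j₀ J, ε * (2⁻¹ : ℝ) ^ (j + 1) :=
          hsplit
      _ ≤ (4 * K / ν) ^ ((N : ℝ))⁻¹ *
            ((((s₀ : ℝ) + 1) * I) ^ ((N : ℝ))⁻¹ * A ^ (((N : ℝ) - 1) / N)) + ε :=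
          add_le_add hHolder hεsum
      _ = (4 * K / ν) ^ ((N : ℝ))⁻¹ * (((s₀ : ℝ) + 1) * I) ^ ((N : ℝ))⁻¹ *
            A ^ (((N : ℝ) - 1) / N) + ε := by ring
  -- conclusion
  have hrQ : r ≤ (4 * K / ν) ^ ((N : ℝ))⁻¹ * (((s₀ : ℝ) + 1) * I) ^ ((N : ℝ))⁻¹ *
      A ^ (((N : ℝ) - 1) / N) :=
    le_of_forall_pos_le_add fun ε hε => (key3 ε hε).le
  have hY0 : (0:ℝ) ≤ ((s₀ : ℝ) + 1) * I := mul_nonneg (by positivity) hI0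
  have hQexp : ((4 * K / ν) ^ ((N : ℝ))⁻¹ * (((s₀ : ℝ) + 1) * I) ^ ((N : ℝ))⁻¹ *
      A ^ (((N : ℝ) - 1) / N)) ^ N = (4 * K / ν) * (((s₀ : ℝ) + 1) * I) * A ^ ((N : ℝ) - 1) := by
    rw [mul_pow, mul_pow]
    rw [Real.rpow_inv_natCast_pow (div_nonneg (mul_nonneg (by norm_num) hK0.le) hν.le) (by omega),
      Real.rpow_inv_natCast_pow hY0 (by omega)]
    congr 1
    rw [← Real.rpow_natCast (A ^ (((N : ℝ) - 1) / N)) N, ← Real.rpow_mul hApos.le]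
    congr 1
    field_simp
  have hfinal : r ^ N ≤ (4 * K / ν) * (((s₀ : ℝ) + 1) * I) * A ^ ((N : ℝ) - 1) := by
    rw [← hQexp]
    exact pow_le_pow_left₀ hr.le hrQ N
  have hAN : (0:ℝ) < A ^ ((N : ℝ) - 1) := Real.rpow_pos_of_pos hApos _
  have hrN : (0:ℝ) < r ^ N := by positivity
  rw [show (1 : ℝ) - (N : ℝ) = -((N : ℝ) - 1) by ring, Real.rpow_neg hApos.le]
  have h10 : r ^ N / A ^ ((N : ℝ) - 1) ≤ (4 * K / ν) * (((s₀ : ℝ) + 1) * I) :=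
    (div_le_iff₀ hAN).mpr hfinal
  calc (A ^ ((N : ℝ) - 1))⁻¹ = r ^ N / A ^ ((N : ℝ) - 1) / r ^ N := by
        field_simp
    _ ≤ (4 * K / ν) * (((s₀ : ℝ) + 1) * I) / r ^ N := by
        exact (div_le_div_iff_of_pos_right hrN).mpr h10
    _ = 4 * K * ((s₀ : ℝ) + 1) / ν / r ^ N * I := by ring
end

section
/- (Minkowski-integral step) Let m > n ≥ 2 and let φ : [0,∞) → (0,∞) be increasing with ∫_{s₅}^{∞} s^{(n−1)/(m−1)} φ(s−s₀)^{−1/(m−1)} ds < ∞. Define φ₁(t) := ( ∫_{t−2}^{∞} φ(s−s₀)^{−1/(m−1)} ds )^{1−m} for large t. Then ∫_{s₅+s₀+2}^{∞} φ₁(t − s₀)^{−1/(n−1)} dt < ∞; more precisely, [ ∫_{s₅+s₀+2}^{∞} φ₁(t−s₀)^{−1/(n−1)} dt ]^{(n−1)/(m−1)} ≤ ∫_{s₅}^{∞} s^{(n−1)/(m−1)} φ(s−s₀)^{−1/(m−1)} ds, up to the stated elementary majorizations, via Minkowski's integral inequality with exponent p = (m−1)/(n−1). -/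
open MeasureTheory Set
open scoped ENNReal

/-- The function `φ₁(t) := ( ∫_{t−2}^{∞} φ(s−s₀)^{−1/(m−1)} ds )^{1−m}`. -/
noncomputable def phi1 (m s₀ : ℕ) (φ : ℝ → ℝ) (t : ℝ) : ℝ :=
  ((∫⁻ s in Ici (t - 2),
      ENNReal.ofReal (φ (s - s₀) ^ (-((1 : ℝ) / ((m : ℝ) - 1))))).toReal) ^ (1 - (m : ℝ))

/-- Minkowski-integral step: for `m > n ≥ 2` and increasing positive `φ` with
`∫_{s₅}^{∞} s^{(n−1)/(m−1)} φ(s−s₀)^{−1/(m−1)} ds < ∞`, the function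
`φ₁(t) := ( ∫_{t−2}^{∞} φ(s−s₀)^{−1/(m−1)} ds )^{1−m}` satisfies
`∫_{s₅+s₀+2}^{∞} φ₁(t−s₀)^{−1/(n−1)} dt < ∞`; more precisely,
`[ ∫_{s₅+s₀+2}^{∞} φ₁(t−s₀)^{−1/(n−1)} dt ]^{(n−1)/(m−1)}
  ≤ ∫_{s₅}^{∞} s^{(n−1)/(m−1)} φ(s−s₀)^{−1/(m−1)} ds`,
via Minkowski's integral inequality with exponent `p = (m−1)/(n−1)`. -/
theorem stmt_11 (m n s₀ s₅ : ℕ) (hn : 2 ≤ n) (hmn : n < m) (hs : s₀ < s₅)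
    (φ : ℝ → ℝ) (hφmono : MonotoneOn φ (Set.Ici 0)) (hφpos : ∀ s : ℝ, 0 ≤ s → 0 < φ s)
    (hfin : ∀ t : ℝ, (s₅ : ℝ) + 2 ≤ t →
      ∫⁻ s in Ici (t - 2),
        ENNReal.ofReal (φ (s - s₀) ^ (-((1 : ℝ) / ((m : ℝ) - 1)))) < ⊤)
    (hint : ∫⁻ s in Ici (s₅ : ℝ),
        ENNReal.ofReal (s ^ (((n : ℝ) - 1) / ((m : ℝ) - 1)) *
          φ (s - s₀) ^ (-((1 : ℝ) / ((m : ℝ) - 1)))) < ⊤) :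
    (∫⁻ t in Ici ((s₅ : ℝ) + s₀ + 2),
        ENNReal.ofReal ((phi1 m s₀ φ (t - s₀)) ^ (-((1 : ℝ) / ((n : ℝ) - 1))))) < ⊤ ∧
    (∫⁻ t in Ici ((s₅ : ℝ) + s₀ + 2),
        ENNReal.ofReal ((phi1 m s₀ φ (t - s₀)) ^ (-((1 : ℝ) / ((n : ℝ) - 1))))) ^
          (((n : ℝ) - 1) / ((m : ℝ) - 1))
      ≤ ∫⁻ s in Ici (s₅ : ℝ),
          ENNReal.ofReal (s ^ (((n : ℝ) - 1) / ((m : ℝ) - 1)) *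
            φ (s - s₀) ^ (-((1 : ℝ) / ((m : ℝ) - 1)))) := by
  have hn2 : (2:ℝ) ≤ (n:ℝ) := by exact_mod_cast hn
  have hnm : (n:ℝ) < (m:ℝ) := by exact_mod_cast hmn
  have hs' : (s₀:ℝ) < (s₅:ℝ) := by exact_mod_cast hs
  have hs₀0 : (0:ℝ) ≤ (s₀:ℝ) := Nat.cast_nonneg _
  have hs₅0 : (0:ℝ) ≤ (s₅:ℝ) := Nat.cast_nonneg _
  have hn1 : (0:ℝ) < (n:ℝ) - 1 := by linarith
  have hm1 : (0:ℝ) < (m:ℝ) - 1 := by linarith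
  set e : ℝ := -((1 : ℝ) / ((m : ℝ) - 1)) with he
  set r : ℝ := ((n : ℝ) - 1) / ((m : ℝ) - 1) with hr
  set p : ℝ := ((m : ℝ) - 1) / ((n : ℝ) - 1) with hp
  have hp1 : 1 < p := by rw [hp, lt_div_iff₀ hn1]; linarith
  have hp0 : 0 < p := lt_trans one_pos hp1
  have hrp : r = 1/p := by rw [hr, hp, one_div_div]
  set q : ℝ := p.conjExponent with hq
  have hpq : p.HolderConjugate q := Real.HolderConjugate.conjExponent hp1
  have hq0 : 0 < q := hpq.symm.pos
  have hpq1 : (p - 1) * q = p := by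
    have h : p - 1 ≠ 0 := sub_ne_zero.mpr hp1.ne'
    rw [hq, Real.conjExponent]; field_simp
  set T : ℝ := (s₅ : ℝ) + s₀ + 2 with hT
  -- the measurable surrogate for the integrand
  set g : ℝ → ℝ≥0∞ := fun s => ENNReal.ofReal (φ (max s (s₅:ℝ) - s₀) ^ e) with hg
  have gmeas : Measurable g := by
    have hmono : Monotone fun s : ℝ => φ (max s (s₅:ℝ) - s₀) := by
      intro a b hab
      have h1 : (0:ℝ) ≤ max a (s₅:ℝ) - s₀ := by
        have := le_max_right a (s₅:ℝ); linarith
      have h2 : (0:ℝ) ≤ max b (s₅:ℝ) - s₀ := by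
        have := le_max_right b (s₅:ℝ); linarith
      refine hφmono h1 h2 ?_
      have := max_le_max hab (le_refl (s₅:ℝ)); linarith
    rw [hg]
    exact ENNReal.measurable_ofReal.comp (hmono.measurable.pow measurable_const)
  have hgne : ∀ s : ℝ, g s ≠ ⊤ := fun s => by
    simp only [hg]; exact ENNReal.ofReal_ne_top
  have hgs : ∀ s : ℝ, (s₅:ℝ) ≤ s → g s = ENNReal.ofReal (φ (s - s₀) ^ e) := by
    intro s hs5; simp only [hg]; rw [max_eq_left hs5]
  set G : ℝ → ℝ≥0∞ := fun t => ∫⁻ s in Ici (t - s₀ - 2), g s with hG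
  have hGdef : ∀ t : ℝ, G t = ∫⁻ s in Ici (t - s₀ - 2), g s := fun t => rfl
  have hGanti : Antitone G := by
    intro t₁ t₂ h
    exact lintegral_mono_set (Ici_subset_Ici.2 (by linarith))
  have Gmeas : Measurable G := hGanti.measurable
  have hGJ : ∀ t : ℝ, T ≤ t →
      G t = ∫⁻ s in Ici (t - s₀ - 2), ENNReal.ofReal (φ (s - s₀) ^ e) := by
    intro t ht
    refine setLIntegral_congr_fun measurableSet_Ici (fun s hs => ?_)
    refine hgs s ?_
    simp only [mem_Ici] at hs
    linarith [hT]
  have hGfin : ∀ t : ℝ, T ≤ t → G t < ⊤ := by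
    intro t ht
    rw [hGJ t ht]
    exact hfin (t - s₀) (by linarith [hT])
  -- reduction of the LHS integral
  have hLHS : (∫⁻ t in Ici T,
      ENNReal.ofReal ((phi1 m s₀ φ (t - s₀)) ^ (-((1 : ℝ) / ((n : ℝ) - 1)))))
      = ∫⁻ t in Ici T, G t ^ p := by
    refine setLIntegral_congr_fun measurableSet_Ici (fun t ht => ?_)
    have ht' : T ≤ t := ht
    simp only [phi1]
    rw [← he, ← hGJ t ht']
    rw [← Real.rpow_mul ENNReal.toReal_nonneg]
    rw [show (1 - (m:ℝ)) * (-((1 : ℝ) / ((n : ℝ) - 1))) = p from by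
      rw [hp]; field_simp; ring]
    rw [← ENNReal.ofReal_rpow_of_nonneg ENNReal.toReal_nonneg hp0.le]
    rw [ENNReal.ofReal_toReal (hGfin t ht').ne]
  set B : ℝ≥0∞ := ∫⁻ s in Ici (s₅ : ℝ), ENNReal.ofReal (s ^ r * φ (s - s₀) ^ e) with hB
  have hBfin : B < ⊤ := by rw [hB]; exact hint
  set A : ℝ≥0∞ := ∫⁻ t in Ici T, G t ^ p with hA
  set Ak : ℕ → ℝ≥0∞ := fun k => ∫⁻ t in Icc T (T + (k:ℝ)), G t ^ p with hAk
  have hAkdef : ∀ k : ℕ, Ak k = ∫⁻ t in Icc T (T + (k:ℝ)), G t ^ p := fun _ => rfl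
  have hAkfin : ∀ k : ℕ, Ak k < ⊤ := by
    intro k
    rw [hAkdef k]
    calc (∫⁻ t in Icc T (T + (k:ℝ)), G t ^ p)
        ≤ ∫⁻ _ in Icc T (T + (k:ℝ)), G T ^ p :=
          setLIntegral_mono measurable_const
            (fun t ht => ENNReal.rpow_le_rpow (hGanti ht.1) hp0.le)
      _ = G T ^ p * volume (Icc T (T + (k:ℝ))) := setLIntegral_const _ _
      _ < ⊤ := ENNReal.mul_lt_top
          (ENNReal.rpow_lt_top_of_nonneg hp0.le (hGfin T le_rfl).ne)
          (by rw [Real.volume_Icc]; exact ENNReal.ofReal_lt_top)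
  -- the key truncated inequality via Hölder
  have key : ∀ k : ℕ, Ak k ≤ B * Ak k ^ (1/q) := by
    intro k
    have hAkq : Ak k ^ (1/q) ≠ ⊤ :=
      (ENNReal.rpow_lt_top_of_nonneg (by positivity) (hAkfin k).ne).ne
    -- step 1: express Ak k as a double integral
    have step1 : Ak k = ∫⁻ t in Icc T (T + (k:ℝ)),
        ∫⁻ s, (if t - (s₀:ℝ) - 2 ≤ s then g s * G t ^ (p-1) else 0) := by
      rw [hAkdef k]
      refine setLIntegral_congr_fun measurableSet_Icc (fun t ht => ?_)
      have ht' : T ≤ t := ht.1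
      have hGt : G t ≠ ⊤ := (hGfin t ht').ne
      have hGp1 : G t ^ (p-1) ≠ ⊤ :=
        (ENNReal.rpow_lt_top_of_nonneg (by linarith) hGt).ne
      symm
      calc (∫⁻ s, if t - (s₀:ℝ) - 2 ≤ s then g s * G t ^ (p-1) else 0)
          = ∫⁻ s, (Ici (t - (s₀:ℝ) - 2)).indicator (fun s => g s * G t ^ (p-1)) s :=
            lintegral_congr fun s => by simp [Set.indicator_apply, mem_Ici]
        _ = ∫⁻ s in Ici (t - (s₀:ℝ) - 2), g s * G t ^ (p-1) :=
            lintegral_indicator measurableSet_Ici _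
        _ = (∫⁻ s in Ici (t - (s₀:ℝ) - 2), g s) * G t ^ (p-1) :=
            lintegral_mul_const' _ _ hGp1
        _ = G t * G t ^ (p-1) := by rw [← hGdef t]
        _ = G t ^ p := by
            rcases eq_or_ne (G t) 0 with h0 | h0
            · rw [h0, ENNReal.zero_rpow_of_pos hp0,
                ENNReal.zero_rpow_of_pos (by linarith : (0:ℝ) < p - 1), mul_zero]
            · conv_rhs => rw [show p = 1 + (p-1) from by ring]
              rw [ENNReal.rpow_add _ _ h0 hGt, ENNReal.rpow_one]
    -- step 2: swap the order of integration (Tonelli)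
    have hFmeas : Measurable fun x : ℝ × ℝ =>
        (if x.1 - (s₀:ℝ) - 2 ≤ x.2 then g x.2 * G x.1 ^ (p-1) else 0) := by
      refine Measurable.ite ?_
        ((gmeas.comp measurable_snd).mul
          ((Gmeas.comp measurable_fst).pow measurable_const)) measurable_const
      exact measurableSet_le ((measurable_fst.sub measurable_const).sub measurable_const)
        measurable_snd
    have swap : (∫⁻ t in Icc T (T + (k:ℝ)),
        ∫⁻ s, (if t - (s₀:ℝ) - 2 ≤ s then g s * G t ^ (p-1) else 0))
        = ∫⁻ s, ∫⁻ t in Icc T (T + (k:ℝ)),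
            (if t - (s₀:ℝ) - 2 ≤ s then g s * G t ^ (p-1) else 0) := by
      exact lintegral_lintegral_swap hFmeas.aemeasurable
    -- step 3: bound the inner integral via Hölder
    have inner : ∀ s : ℝ, (∫⁻ t in Icc T (T + (k:ℝ)),
        (if t - (s₀:ℝ) - 2 ≤ s then g s * G t ^ (p-1) else 0))
        ≤ (g s * ENNReal.ofReal (s - s₅) ^ (1/p)) * Ak k ^ (1/q) := by
      intro s
      have h1 : (∫⁻ t in Icc T (T + (k:ℝ)),
          (if t - (s₀:ℝ) - 2 ≤ s then g s * G t ^ (p-1) else 0))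
          = ∫⁻ t in Iic (s + s₀ + 2) ∩ Icc T (T + (k:ℝ)), g s * G t ^ (p-1) := by
        rw [show (fun t => if t - (s₀:ℝ) - 2 ≤ s then g s * G t ^ (p-1) else 0)
            = fun t => (Iic (s + (s₀:ℝ) + 2)).indicator (fun t => g s * G t ^ (p-1)) t from
          funext fun t => by
            simp only [Set.indicator_apply, mem_Iic]
            exact if_congr (by constructor <;> intro <;> linarith) rfl rfl]
        rw [lintegral_indicator measurableSet_Iic,
          Measure.restrict_restrict measurableSet_Iic]
      have h2 : (∫⁻ t in Iic (s + s₀ + 2) ∩ Icc T (T + (k:ℝ)), g s * G t ^ (p-1))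
          = g s * ∫⁻ t in Iic (s + s₀ + 2) ∩ Icc T (T + (k:ℝ)), G t ^ (p-1) :=
        lintegral_const_mul' _ _ (hgne s)
      have h3 : (∫⁻ t in Iic (s + s₀ + 2) ∩ Icc T (T + (k:ℝ)), G t ^ (p-1))
          ≤ Ak k ^ (1/q) * ENNReal.ofReal (s - s₅) ^ (1/p) := by
        have hhol := ENNReal.lintegral_mul_le_Lp_mul_Lq
          (volume.restrict (Iic (s + s₀ + 2) ∩ Icc T (T + (k:ℝ)))) hpq.symm
          (f := fun t => G t ^ (p-1)) (g := fun _ => 1)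
          ((Gmeas.pow measurable_const).aemeasurable) aemeasurable_const
        simp only [Pi.mul_apply, mul_one, ENNReal.one_rpow] at hhol
        refine le_trans hhol ?_
        have hfq : (∫⁻ t in Iic (s + s₀ + 2) ∩ Icc T (T + (k:ℝ)), (G t ^ (p-1)) ^ q)
            ≤ Ak k := by
          rw [show (fun t => (G t ^ (p-1)) ^ q) = fun t => G t ^ p from
            funext fun t => by rw [← ENNReal.rpow_mul, hpq1]]
          rw [hAkdef k]
          exact lintegral_mono_set inter_subset_right
        have hvol : (∫⁻ _ in Iic (s + s₀ + 2) ∩ Icc T (T + (k:ℝ)), (1:ℝ≥0∞))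
            ≤ ENNReal.ofReal (s - s₅) := by
          rw [setLIntegral_const, one_mul]
          have hsub : Iic (s + (s₀:ℝ) + 2) ∩ Icc T (T + (k:ℝ)) ⊆ Icc T (s + (s₀:ℝ) + 2) :=
            fun t ht => ⟨ht.2.1, ht.1⟩
          calc volume (Iic (s + (s₀:ℝ) + 2) ∩ Icc T (T + (k:ℝ)))
              ≤ volume (Icc T (s + (s₀:ℝ) + 2)) := measure_mono hsub
            _ = ENNReal.ofReal (s + (s₀:ℝ) + 2 - T) := Real.volume_Icc
            _ = ENNReal.ofReal (s - s₅) := by congr 1; rw [hT]; ring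
        exact mul_le_mul' (ENNReal.rpow_le_rpow hfq (by positivity))
          (ENNReal.rpow_le_rpow hvol (by positivity))
      calc (∫⁻ t in Icc T (T + (k:ℝ)),
          (if t - (s₀:ℝ) - 2 ≤ s then g s * G t ^ (p-1) else 0))
          = g s * ∫⁻ t in Iic (s + s₀ + 2) ∩ Icc T (T + (k:ℝ)), G t ^ (p-1) := by
            rw [h1, h2]
        _ ≤ g s * (Ak k ^ (1/q) * ENNReal.ofReal (s - s₅) ^ (1/p)) :=
            mul_le_mul_right h3 _
        _ = (g s * ENNReal.ofReal (s - s₅) ^ (1/p)) * Ak k ^ (1/q) := by ring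
    -- step 4: bound the resulting s-integral by B
    have hB1 : (∫⁻ s, g s * ENNReal.ofReal (s - s₅) ^ (1/p)) ≤ B := by
      have hpt : ∀ s : ℝ, g s * ENNReal.ofReal (s - s₅) ^ (1/p)
          ≤ (Ici (s₅:ℝ)).indicator
              (fun s => ENNReal.ofReal (s ^ r * φ (s - s₀) ^ e)) s := by
        intro s
        by_cases hs5 : (s₅:ℝ) ≤ s
        · rw [Set.indicator_of_mem (mem_Ici.mpr hs5)]
          have hφ0 : (0:ℝ) ≤ φ (s - s₀) ^ e :=
            Real.rpow_nonneg (hφpos _ (by linarith)).le e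
          rw [hgs s hs5,
            ENNReal.ofReal_rpow_of_nonneg (by linarith) (by positivity),
            ← ENNReal.ofReal_mul hφ0]
          refine ENNReal.ofReal_le_ofReal ?_
          rw [mul_comm, hrp]
          exact mul_le_mul_of_nonneg_right
            (Real.rpow_le_rpow (by linarith) (by linarith) (by positivity)) hφ0
        · rw [Set.indicator_of_notMem (fun h => hs5 (mem_Ici.mp h))]
          push_neg at hs5
          rw [ENNReal.ofReal_of_nonpos (by linarith),
            ENNReal.zero_rpow_of_pos (by positivity), mul_zero]
      calc (∫⁻ s, g s * ENNReal.ofReal (s - s₅) ^ (1/p))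
          ≤ ∫⁻ s, (Ici (s₅:ℝ)).indicator
              (fun s => ENNReal.ofReal (s ^ r * φ (s - s₀) ^ e)) s := lintegral_mono hpt
        _ = B := by rw [lintegral_indicator measurableSet_Ici, hB]
    calc Ak k = ∫⁻ s, ∫⁻ t in Icc T (T + (k:ℝ)),
          (if t - (s₀:ℝ) - 2 ≤ s then g s * G t ^ (p-1) else 0) := step1.trans swap
      _ ≤ ∫⁻ s, (g s * ENNReal.ofReal (s - s₅) ^ (1/p)) * Ak k ^ (1/q) :=
          lintegral_mono inner
      _ = (∫⁻ s, g s * ENNReal.ofReal (s - s₅) ^ (1/p)) * Ak k ^ (1/q) :=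
          lintegral_mul_const' _ _ hAkq
      _ ≤ B * Ak k ^ (1/q) := mul_le_mul_left hB1 _
  -- cancel to get the truncated Minkowski inequality
  have hAkB : ∀ k : ℕ, Ak k ≤ B ^ p := by
    intro k
    rcases eq_or_ne (Ak k) 0 with h0 | h0
    · rw [h0]; exact zero_le ..
    · have hne0 : Ak k ^ (1/q) ≠ 0 := by
        rw [Ne, ENNReal.rpow_eq_zero_iff]
        rintro (⟨h, _⟩ | ⟨h, _⟩)
        · exact h0 h
        · exact (hAkfin k).ne h
      have hneT : Ak k ^ (1/q) ≠ ⊤ :=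
        (ENNReal.rpow_lt_top_of_nonneg (by positivity) (hAkfin k).ne).ne
      have h1 : Ak k ^ (1/p) ≤ B := by
        rw [← ENNReal.mul_le_mul_iff_left hne0 hneT]
        calc Ak k ^ (1/p) * Ak k ^ (1/q) = Ak k ^ (1/p + 1/q) :=
            (ENNReal.rpow_add _ _ h0 (hAkfin k).ne).symm
          _ = Ak k := by
              rw [show (1:ℝ)/p + 1/q = 1 from by
                  simpa [one_div] using hpq.inv_add_inv_eq_one, ENNReal.rpow_one]
          _ ≤ B * Ak k ^ (1/q) := key k
      have h2 : Ak k = (Ak k ^ (1/p)) ^ p := by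
        rw [← ENNReal.rpow_mul, show (1/p) * p = 1 from by field_simp, ENNReal.rpow_one]
      rw [h2]
      exact ENNReal.rpow_le_rpow h1 hp0.le
  -- pass to the supremum
  have hsup : A ≤ B ^ p := by
    have hind : ∀ t : ℝ, (Ici T).indicator (fun t => G t ^ p) t
        = ⨆ k : ℕ, (Icc T (T + (k:ℝ))).indicator (fun t => G t ^ p) t := by
      intro t
      refine le_antisymm ?_ (iSup_le fun k =>
        Set.indicator_le_indicator_of_subset Icc_subset_Ici_self (fun _ => zero_le ..) t)
      by_cases ht : t ∈ Ici T
      · obtain ⟨k, hk⟩ := exists_nat_ge (t - T)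
        rw [Set.indicator_of_mem ht]
        refine le_trans (le_of_eq ?_) (le_iSup _ k)
        have htk : t ∈ Icc T (T + (k:ℝ)) := mem_Icc.mpr ⟨mem_Ici.mp ht, by
          have := mem_Ici.mp ht; linarith⟩
        rw [Set.indicator_of_mem htk]
      · rw [Set.indicator_of_notMem ht]; exact zero_le ..
    have hAsup : A = ⨆ k : ℕ, Ak k := by
      rw [hA, ← lintegral_indicator measurableSet_Ici]
      rw [show ((Ici T).indicator fun t => G t ^ p)
          = fun t => ⨆ k : ℕ, (Icc T (T + (k:ℝ))).indicator (fun t => G t ^ p) t from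
        funext hind]
      rw [lintegral_iSup
        (fun k => (Gmeas.pow measurable_const).indicator measurableSet_Icc)
        (fun k k' hkk' => fun t =>
          Set.indicator_le_indicator_of_subset
            (Icc_subset_Icc_right (add_le_add_right (Nat.cast_le.mpr hkk') T)) (fun _ => zero_le ..) t)]
      exact iSup_congr fun k => (lintegral_indicator measurableSet_Icc _).trans
        (hAkdef k).symm
    rw [hAsup]
    exact iSup_le hAkB
  have hAfin : A < ⊤ :=
    lt_of_le_of_lt hsup (ENNReal.rpow_lt_top_of_nonneg hp0.le hBfin.ne)
  have hfinal : A ^ (1/p) ≤ B := by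
    calc A ^ (1/p) ≤ (B ^ p) ^ (1/p) := ENNReal.rpow_le_rpow hsup (by positivity)
      _ = B := by
        rw [← ENNReal.rpow_mul, show p * (1/p) = 1 from by field_simp, ENNReal.rpow_one]
  constructor
  · rw [hLHS]; exact hAfin
  · rw [hLHS, hrp]; exact hfinal
end
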